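/- Consider the two-vertex one-player parity game with vertices u, v, self-loop edges of priority 0 at each vertex, an edge (u, v) of priority 1, and an edge (v, u) of priority 2, with all vertices belonging to Adam. Eve wins the parity game from u, but Adam wins the 0-register game from u; moreover Eve wins the 1-register game from u. Hence this game has register-index exactly 1. -/
import Mathlib


/-- A parity game arena with priorities on edges. `owner v = true` means the
position belongs to Eve; `edge v p w` means there is an edge from `v` to `w`
carrying priority `p`. -/
structure PGame (V : Type) where
  owner : V → Bool
  edge : V → ℕ → V → Prop

/-- The priority `p` occurs infinitely often in the priority sequence `c`. -/
def InfOcc (c : ℕ → ℕ) (p : ℕ) : Prop := ∀ n, ∃ i, n ≤ i ∧ c i = p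

/-- Eve wins a play whose sequence of traversed priorities is `c` iff the
largest priority occurring infinitely often is even. -/
def EveWinsPlay (c : ℕ → ℕ) : Prop :=
  ∃ p, InfOcc c p ∧ Even p ∧ ∀ q, InfOcc c q → q ≤ p

/-- `π` (positions) together with `c` (priorities) forms a play of `G`. -/
def IsPlay {V : Type} (G : PGame V) (π : ℕ → V) (c : ℕ → ℕ) : Prop :=
  ∀ i, G.edge (π i) (c i) (π (i + 1))

/-- A (history-dependent) strategy: given the history of previously visited
positions and the current position, it picks an outgoing edge (priority and
successor). -/
structure Strategy {V : Type} (G : PGame V) where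
  next : List V → V → ℕ × V
  valid : ∀ l v, G.edge v (next l v).1 (next l v).2

def histUpTo {V : Type} (π : ℕ → V) (i : ℕ) : List V := List.ofFn (fun j : Fin i => π j)

/-- The play `(π, c)` agrees with the strategy `σ` of player `b`. -/
def Agrees {V : Type} (G : PGame V) (b : Bool) (σ : Strategy G) (π : ℕ → V) (c : ℕ → ℕ) : Prop :=
  ∀ i, G.owner (π i) = b → (c i, π (i + 1)) = σ.next (histUpTo π i) (π i)

/-- Player `b` (`true` = Eve, `false` = Adam) has a winning strategy from `v`. -/
def WinsFrom {V : Type} (G : PGame V) (b : Bool) (v : V) : Prop :=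
  ∃ σ : Strategy G, ∀ π c, IsPlay G π c → π 0 = v → Agrees G b σ π c →
    (if b = true then EveWinsPlay c else ¬ EveWinsPlay c)

/-- Register update: registers below `i` are reset to `0`, register `i` is set
to `p`, registers above `i` become `max (r j) p`. -/
def newReg {k : ℕ} (r : Fin (k + 1) → ℕ) (i : Fin (k + 1)) (p : ℕ) : Fin (k + 1) → ℕ :=
  fun j => if j < i then 0 else if j = i then p else max (r j) p

/-- Output produced when Eve chooses register `i` upon seeing priority `p`. -/
def outE {k : ℕ} (r : Fin (k + 1) → ℕ) (i : Fin (k + 1)) (p : ℕ) : ℕ :=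
  if Even (max (r i) p) then 2 * i.1 else 2 * i.1 + 1

/-- Output produced when Adam chooses register `i` (Adam-controlled variant). -/
def outA {k : ℕ} (r : Fin (k + 1) → ℕ) (i : Fin (k + 1)) (p : ℕ) : ℕ :=
  if Even (r i) then 2 * i.1 + 2 else 2 * i.1 + 1

/-- Positions of the `k`-register game: a position of `G`, the register
contents, and `none` (a move of `G` is next) or `some p` (the register
controller must choose a register, `p` being the priority just seen). -/
abbrev RegPos (V : Type) (k : ℕ) : Type := V × (Fin (k + 1) → ℕ) × Option ℕ

/-- The `k`-register game on `G` in which Eve controls the registers. -/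
def regGameE {V : Type} (G : PGame V) (k : ℕ) : PGame (RegPos V k) where
  owner := fun s => match s.2.2 with
    | none => G.owner s.1
    | some _ => true
  edge := fun s o s' => match s, s' with
    | (v, r, none), (w, r', some p) => G.edge v p w ∧ r' = r ∧ o = 0
    | (v, r, some p), (w, r', none) => w = v ∧ ∃ i, r' = newReg r i p ∧ o = outE r i p
    | _, _ => False

/-- The `k`-register game on `G` in which Adam controls the registers. -/
def regGameA {V : Type} (G : PGame V) (k : ℕ) : PGame (RegPos V k) where
  owner := fun s => match s.2.2 with
    | none => G.owner s.1
    | some _ => false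
  edge := fun s o s' => match s, s' with
    | (v, r, none), (w, r', some p) => G.edge v p w ∧ r' = r ∧ o = 0
    | (v, r, some p), (w, r', none) => w = v ∧ ∃ i, r' = newReg r i p ∧ o = outA r i p
    | _, _ => False

/-- The two-vertex one-player arena of Figure 2: vertices `u = 0` and `v = 1`,
self-loops of priority `0`, an edge `(u, v)` of priority `1` and an edge
`(v, u)` of priority `2`; all positions belong to Adam. -/
def G5 : PGame (Fin 2) where
  owner := fun _ => false
  edge := fun a p b =>
    (a = 0 ∧ b = 0 ∧ p = 0) ∨ (a = 1 ∧ b = 1 ∧ p = 0) ∨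
    (a = 0 ∧ b = 1 ∧ p = 1) ∨ (a = 1 ∧ b = 0 ∧ p = 2)

-- part 1 lemmas
lemma g5_le (a b : Fin 2) (p : ℕ) (h : G5.edge a p b) : p ≤ 2 := by
  rcases h with ⟨_,_,h⟩|⟨_,_,h⟩|⟨_,_,h⟩|⟨_,_,h⟩ <;> omega

lemma vert_lemma (π : ℕ → Fin 2) (c : ℕ → ℕ) (hp : IsPlay G5 π c) (j : ℕ) :
    ∀ m, j ≤ m → π j = 1 → π m = 0 → ∃ i, j ≤ i ∧ i < m ∧ c i = 2 := by
  intro m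
  induction m with
  | zero => intro hj h1 h0; interval_cases j; rw [h1] at h0; exact absurd h0 (by decide)
  | succ m ih =>
    intro hj h1 h0
    rcases Nat.lt_or_ge j (m+1) with hlt | hge
    · have hjm : j ≤ m := by omega
      have he := hp m
      rcases he with ⟨ha,hb,hc⟩|⟨ha,hb,hc⟩|⟨ha,hb,hc⟩|⟨ha,hb,hc⟩
      · obtain ⟨i, h1, h2, h3⟩ := ih hjm h1 ha; exact ⟨i, h1, by omega, h3⟩
      · rw [h0] at hb; exact absurd hb (by decide)
      · rw [h0] at hb; exact absurd hb (by decide)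
      · exact ⟨m, hjm, by omega, hc⟩
    · have : j = m + 1 := by omega
      subst this; rw [h1] at h0; exact absurd h0 (by decide)

lemma part1 : WinsFrom G5 true 0 := by
  refine ⟨⟨fun _ v => (0, v), ?_⟩, ?_⟩
  · intro l v; fin_cases v
    · exact Or.inl ⟨rfl, rfl, rfl⟩
    · exact Or.inr (Or.inl ⟨rfl, rfl, rfl⟩)
  · intro π c hplay h0 _
    simp only [if_pos rfl]
    have hle : ∀ i, c i ≤ 2 := fun i => g5_le _ _ _ (hplay i)
    by_cases h2 : InfOcc c 2
    · exact ⟨2, h2, by decide, fun q hq => by obtain ⟨i, _, hi⟩ := hq 0; exact hi ▸ hle i⟩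
    · simp only [InfOcc] at h2; push_neg at h2
      obtain ⟨N, hN⟩ := h2
      have h1 : ¬ InfOcc c 1 := by
        intro h1
        obtain ⟨i, hNi, hi⟩ := h1 N
        have he := hplay i
        rcases he with ⟨ha,hb,hc⟩|⟨ha,hb,hc⟩|⟨ha,hb,hc⟩|⟨ha,hb,hc⟩ <;> try omega
        obtain ⟨i', hii', hi'⟩ := h1 (i+1)
        have he' := hplay i'
        have hπi' : π i' = 0 := by
          rcases he' with ⟨ha',_,hc'⟩|⟨_,_,hc'⟩|⟨ha',_,hc'⟩|⟨_,_,hc'⟩ <;> first | exact ha' | omega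
        obtain ⟨m, hm1, hm2, hm3⟩ := vert_lemma π c hplay (i+1) i' hii' hb hπi'
        exact hN m (by omega) hm3
      simp only [InfOcc] at h1; push_neg at h1
      obtain ⟨N1, hN1⟩ := h1
      refine ⟨0, ?_, by decide, ?_⟩
      · intro n
        refine ⟨max n (max N N1), le_max_left _ _, ?_⟩
        have := hle (max n (max N N1))
        have := hN (max n (max N N1)) (by omega)
        have := hN1 (max n (max N N1)) (by omega)
        omega
      · intro q hq
        obtain ⟨i, hi1, hi2⟩ := hq (max N N1)
        have := hle i
        have := hN i (by omega)
        have := hN1 i (by omega)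
        omega
-- part 2
lemma newReg0 (r : Fin 1 → ℕ) (p : ℕ) : newReg r 0 p = fun _ => p := by
  funext j
  have : j = 0 := Fin.fin_one_eq_zero _
  subst this
  simp [newReg]

lemma stepSome0 (π : ℕ → RegPos (Fin 2) 0) (c : ℕ → ℕ)
    (hp : IsPlay (regGameE G5 0) π c) (n : ℕ) (v : Fin 2) (r : Fin 1 → ℕ) (p : ℕ)
    (h : π n = (v, r, some p)) :
    c n = outE r 0 p ∧ π (n + 1) = (v, fun _ => p, none) := by
  have he := hp n
  rw [h] at he
  rcases h' : π (n+1) with ⟨w, r', oo⟩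
  rw [h'] at he
  cases oo with
  | none =>
    obtain ⟨hw, i, hr', ho⟩ := he
    have hi : i = 0 := Fin.fin_one_eq_zero _
    subst hi hw
    rw [newReg0] at hr'
    subst hr'
    exact ⟨ho, rfl⟩
  | some q => exact absurd he (by simp [regGameE])
def adamStrat : Strategy (regGameE G5 0) where
  next := fun _ s => match s with
    | (v, r, none) =>
        if v = 0 then (0, (1, r, some 1))
        else if r 0 = 1 then (0, (1, r, some 0)) else (0, (0, r, some 2))
    | (v, r, some p) => (outE r 0 p, (v, newReg r 0 p, none))
  valid := by
    intro l s
    rcases s with ⟨x, r, oo⟩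
    cases oo with
    | none =>
      by_cases hx : x = 0
      · simp only [hx, if_pos rfl]
        exact ⟨Or.inr (Or.inr (Or.inl ⟨rfl, rfl, rfl⟩)), rfl, rfl⟩
      · have hx1 : x = 1 := by omega
        subst hx1
        by_cases hr : r 0 = 1
        · simp only [if_neg hx, if_pos hr]
          exact ⟨Or.inr (Or.inl ⟨rfl, rfl, rfl⟩), rfl, rfl⟩
        · simp only [if_neg hx, if_neg hr]
          exact ⟨Or.inr (Or.inr (Or.inr ⟨rfl, rfl, rfl⟩)), rfl, rfl⟩
    | some p => exact ⟨rfl, 0, rfl, rfl⟩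

lemma stepNoneAdam (π : ℕ → RegPos (Fin 2) 0) (c : ℕ → ℕ)
    (hag : Agrees (regGameE G5 0) false adamStrat π c) (n : ℕ) (v : Fin 2) (r : Fin 1 → ℕ)
    (h : π n = (v, r, none)) :
    (c n, π (n + 1)) = (if v = 0 then ((0:ℕ), ((1:Fin 2), r, some 1))
        else if r 0 = 1 then (0, (1, r, some 0)) else (0, (0, r, some 2))) := by
  have ho : (regGameE G5 0).owner (π n) = false := by rw [h]; rfl
  have := hag n ho
  rw [this, h]
  rfl

def cyc2 : ℕ → RegPos (Fin 2) 0
  | 0 => (1, fun _ => 1, none)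
  | 1 => (1, fun _ => 1, some 0)
  | 2 => (1, fun _ => 0, none)
  | 3 => (0, fun _ => 0, some 2)
  | 4 => (0, fun _ => 2, none)
  | _ => (1, fun _ => 2, some 1)

def S2 : ℕ → RegPos (Fin 2) 0
  | 0 => (0, fun _ => 0, none)
  | 1 => (1, fun _ => 0, some 1)
  | n + 2 => cyc2 (n % 6)

def ocyc2 : ℕ → ℕ
  | 1 => 1
  | _ => 0

def O2 : ℕ → ℕ
  | 0 => 0
  | 1 => 1
  | n + 2 => ocyc2 (n % 6)

lemma step2 (π : ℕ → RegPos (Fin 2) 0) (c : ℕ → ℕ)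
    (hp : IsPlay (regGameE G5 0) π c)
    (hag : Agrees (regGameE G5 0) false adamStrat π c) :
    ∀ n, π n = S2 n → π (n + 1) = S2 (n + 1) ∧ c n = O2 n := by
  intro n h
  match n with
  | 0 =>
    have := stepNoneAdam π c hag 0 0 (fun _ => 0) h
    rw [if_pos rfl, Prod.mk.injEq] at this
    exact ⟨this.2, this.1⟩
  | 1 =>
    have := stepSome0 π c hp 1 1 (fun _ => 0) 1 h
    refine ⟨?_, ?_⟩
    · rw [this.2]; show _ = cyc2 (0 % 6); norm_num [cyc2]
    · rw [this.1]; simp [outE, O2]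
  | (n + 2) =>
    have hk : n % 6 = 0 ∨ n % 6 = 1 ∨ n % 6 = 2 ∨ n % 6 = 3 ∨ n % 6 = 4 ∨ n % 6 = 5 := by omega
    have hS : S2 (n + 2) = cyc2 (n % 6) := rfl
    have hS' : S2 (n + 3) = cyc2 ((n + 1) % 6) := rfl
    have hO : O2 (n + 2) = ocyc2 (n % 6) := rfl
    rcases hk with hk | hk | hk | hk | hk | hk
    · -- (1, 1, none) -> (1, 1, some 0)
      rw [hS, hk] at h
      have := stepNoneAdam π c hag (n+2) 1 (fun _ => 1) h
      rw [if_neg (by decide), if_pos rfl, Prod.mk.injEq] at this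
      have h1 : (n + 1) % 6 = 1 := by omega
      rw [hS', h1, hO, hk]
      exact ⟨this.2, this.1⟩
    · -- (1, 1, some 0) -> (1, 0, none), out 1
      rw [hS, hk] at h
      have := stepSome0 π c hp (n+2) 1 (fun _ => 1) 0 h
      have h1 : (n + 1) % 6 = 2 := by omega
      rw [hS', h1, hO, hk]
      refine ⟨by rw [this.2]; rfl, by rw [this.1]; simp [outE, ocyc2]⟩
    · -- (1, 0, none) -> (0, 0, some 2)
      rw [hS, hk] at h
      have := stepNoneAdam π c hag (n+2) 1 (fun _ => 0) h
      rw [if_neg (by decide), if_neg (by norm_num), Prod.mk.injEq] at this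
      have h1 : (n + 1) % 6 = 3 := by omega
      rw [hS', h1, hO, hk]
      exact ⟨this.2, this.1⟩
    · -- (0, 0, some 2) -> (0, 2, none), out 0
      rw [hS, hk] at h
      have := stepSome0 π c hp (n+2) 0 (fun _ => 0) 2 h
      have h1 : (n + 1) % 6 = 4 := by omega
      rw [hS', h1, hO, hk]
      refine ⟨by rw [this.2]; rfl, by rw [this.1]; simp [outE, ocyc2]⟩
    · -- (0, 2, none) -> (1, 2, some 1)
      rw [hS, hk] at h
      have := stepNoneAdam π c hag (n+2) 0 (fun _ => 2) h
      rw [if_pos rfl, Prod.mk.injEq] at this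
      have h1 : (n + 1) % 6 = 5 := by omega
      rw [hS', h1, hO, hk]
      exact ⟨this.2, this.1⟩
    · -- (1, 2, some 1) -> (1, 1, none), out 0
      rw [hS, hk] at h
      have := stepSome0 π c hp (n+2) 1 (fun _ => 2) 1 h
      have h1 : (n + 1) % 6 = 0 := by omega
      rw [hS', h1, hO, hk]
      refine ⟨by rw [this.2]; rfl, by rw [this.1]; simp [outE, ocyc2]⟩

lemma part2 : WinsFrom (regGameE G5 0) false (0, fun _ => 0, none) := by
  refine ⟨adamStrat, ?_⟩
  intro π c hplay h0 hag
  simp only [if_neg (by decide : ¬ (false = true))]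
  have hS : ∀ n, π n = S2 n := by
    intro n
    induction n with
    | zero => exact h0
    | succ m ih => exact (step2 π c hplay hag m ih).1
  have hc : ∀ n, c n = O2 n := fun n => (step2 π c hplay hag n (hS n)).2
  have hle : ∀ n, c n ≤ 1 := by
    intro n
    rw [hc n]
    match n with
    | 0 => norm_num [O2]
    | 1 => norm_num [O2]
    | m + 2 =>
      show ocyc2 (m % 6) ≤ 1
      have : m % 6 = 0 ∨ m % 6 = 1 ∨ m % 6 = 2 ∨ m % 6 = 3 ∨ m % 6 = 4 ∨ m % 6 = 5 := by omega
      rcases this with h|h|h|h|h|h <;> rw [h] <;> norm_num [ocyc2]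
  have h1 : InfOcc c 1 := by
    intro n
    refine ⟨6 * n + 3, by omega, ?_⟩
    rw [hc (6*n+3)]
    show O2 (6 * n + 1 + 2) = 1
    show ocyc2 ((6 * n + 1) % 6) = 1
    rw [show (6 * n + 1) % 6 = 1 by omega]
    rfl
  rintro ⟨p, hinf, heven, hdom⟩
  have hp1 : 1 ≤ p := hdom 1 h1
  obtain ⟨i, _, hi⟩ := hinf 0
  have := hle i
  rw [Nat.even_iff] at heven
  omega
-- part 3
lemma nr00 (r : Fin 2 → ℕ) (p : ℕ) : newReg r 0 p 0 = p := by simp [newReg]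
lemma nr01 (r : Fin 2 → ℕ) (p : ℕ) : newReg r 0 p 1 = max (r 1) p := by
  simp [newReg]
lemma nr10 (r : Fin 2 → ℕ) (p : ℕ) : newReg r 1 p 0 = 0 := by
  simp [newReg]
lemma nr11 (r : Fin 2 → ℕ) (p : ℕ) : newReg r 1 p 1 = p := by simp [newReg]

def eveStrat : Strategy (regGameE G5 1) where
  next := fun _ s => match s with
    | (v, r, none) => (0, (v, r, some 0))
    | (v, r, some p) =>
        (outE r (if p = 2 then 1 else 0) p, (v, newReg r (if p = 2 then 1 else 0) p, none))
  valid := by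
    intro l s
    rcases s with ⟨x, r, oo⟩
    cases oo with
    | none =>
      refine ⟨?_, rfl, rfl⟩
      fin_cases x
      · exact Or.inl ⟨rfl, rfl, rfl⟩
      · exact Or.inr (Or.inl ⟨rfl, rfl, rfl⟩)
    | some p => exact ⟨rfl, _, rfl, rfl⟩

section Part3

variable (π : ℕ → RegPos (Fin 2) 1) (c : ℕ → ℕ)

lemma stepNone3 (hp : IsPlay (regGameE G5 1) π c) (n : ℕ) (v : Fin 2) (r : Fin 2 → ℕ)
    (h : π n = (v, r, none)) :
    ∃ w p, π (n + 1) = (w, r, some p) ∧ G5.edge v p w ∧ c n = 0 := by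
  have he := hp n
  rw [h] at he
  rcases h' : π (n+1) with ⟨w, r', oo⟩
  rw [h'] at he
  cases oo with
  | some p =>
    obtain ⟨h1, h2, h3⟩ := he
    subst h2
    exact ⟨w, p, rfl, h1, h3⟩
  | none => exact absurd he (by simp [regGameE])

lemma stepSome3 (hag : Agrees (regGameE G5 1) true eveStrat π c) (n : ℕ) (v : Fin 2)
    (r : Fin 2 → ℕ) (p : ℕ) (h : π n = (v, r, some p)) :
    c n = outE r (if p = 2 then 1 else 0) p ∧
      π (n + 1) = (v, newReg r (if p = 2 then 1 else 0) p, none) := by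
  have ho : (regGameE G5 1).owner (π n) = true := by rw [h]; rfl
  have := hag n ho
  rw [h] at this
  have : (c n, π (n + 1)) =
      (outE r (if p = 2 then 1 else 0) p, (v, newReg r (if p = 2 then 1 else 0) p, none)) := this
  rw [Prod.mk.injEq] at this
  exact this

lemma inv3 (hp : IsPlay (regGameE G5 1) π c) (hag : Agrees (regGameE G5 1) true eveStrat π c)
    (h0 : π 0 = (0, fun _ => 0, none)) :
    ∀ n, (π n).2.1 1 ≤ 2 ∧ ∀ p, (π n).2.2 = some p → p ≤ 2 := by
  intro n
  induction n with
  | zero => rw [h0]; exact ⟨by norm_num, by simp⟩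
  | succ m ih =>
    rcases h : π m with ⟨v, r, oo⟩
    rw [h] at ih
    cases oo with
    | none =>
      obtain ⟨w, p, h1, h2, _⟩ := stepNone3 π c hp m v r h
      rw [h1]
      refine ⟨ih.1, ?_⟩
      intro q hq
      simp only at hq
      rw [Option.some.injEq] at hq
      subst hq
      exact g5_le _ _ _ h2
    | some p =>
      have hple : p ≤ 2 := ih.2 p rfl
      have ih1 : r 1 ≤ 2 := ih.1
      obtain ⟨_, h2⟩ := stepSome3 π c hag m v r p h
      rw [h2]
      refine ⟨?_, by simp⟩
      show newReg r (if p = 2 then 1 else 0) p 1 ≤ 2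
      by_cases hp2 : p = 2
      · rw [if_pos hp2, nr11]; omega
      · rw [if_neg hp2, nr01]; omega

lemma cval3 (hp : IsPlay (regGameE G5 1) π c) (hag : Agrees (regGameE G5 1) true eveStrat π c)
    (h0 : π 0 = (0, fun _ => 0, none)) (n : ℕ) (v : Fin 2) (r : Fin 2 → ℕ) (p : ℕ)
    (h : π n = (v, r, some p)) : (p = 2 → c n = 2) ∧ c n ≤ 2 := by
  have hr1 : r 1 ≤ 2 := by
    have := (inv3 π c hp hag h0 n).1
    rw [h] at this
    exact this
  have hc := (stepSome3 π c hag n v r p h).1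
  by_cases hp2 : p = 2
  · subst hp2
    rw [if_pos rfl] at hc
    have : outE r 1 2 = 2 := by
      have : max (r 1) 2 = 2 := by omega
      simp [outE, this]
    rw [hc, this]
    exact ⟨fun _ => rfl, by omega⟩
  · rw [if_neg hp2] at hc
    refine ⟨fun h' => absurd h' hp2, ?_⟩
    rw [hc]
    unfold outE
    split <;> simp
end Part3
section Part3b

variable (π : ℕ → RegPos (Fin 2) 1) (c : ℕ → ℕ)

lemma alt3 (hp : IsPlay (regGameE G5 1) π c) (hag : Agrees (regGameE G5 1) true eveStrat π c)
    (h0 : π 0 = (0, fun _ => 0, none)) :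
    ∀ t, (∃ v r, π (2 * t) = (v, r, none)) ∧ ∃ v r p, π (2 * t + 1) = (v, r, some p) := by
  intro t
  induction t with
  | zero =>
    refine ⟨⟨0, fun _ => 0, h0⟩, ?_⟩
    obtain ⟨w, p, h1, _, _⟩ := stepNone3 π c hp 0 0 (fun _ => 0) h0
    exact ⟨w, _, p, h1⟩
  | succ m ih =>
    obtain ⟨_, v, r, p, hsome⟩ := ih
    obtain ⟨hc, h2⟩ := stepSome3 π c hag (2 * m + 1) v r p hsome
    have h2' : π (2 * (m + 1)) = (v, newReg r (if p = 2 then 1 else 0) p, none) := by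
      rw [show 2 * (m + 1) = 2 * m + 1 + 1 by ring]; exact h2
    refine ⟨⟨_, _, h2'⟩, ?_⟩
    obtain ⟨w, q, h3, _, _⟩ := stepNone3 π c hp (2 * (m + 1)) _ _ h2'
    exact ⟨w, _, q, h3⟩

/-- once at vertex 1 (beyond N where no output 2 appears), stay at vertex 1 -/
lemma stay3 (hp : IsPlay (regGameE G5 1) π c) (hag : Agrees (regGameE G5 1) true eveStrat π c)
    (h0 : π 0 = (0, fun _ => 0, none)) (N : ℕ) (hN : ∀ i, N ≤ i → c i ≠ 2) :
    ∀ k n, N ≤ n → (π n).1 = 1 → (π (n + k)).1 = 1 := by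
  have key : ∀ n, N ≤ n → (π n).1 = 1 → (π (n + 1)).1 = 1 := by
    intro n hn h1
    rcases h : π n with ⟨v, r, oo⟩
    have hv : v = 1 := by rw [h] at h1; exact h1
    subst hv
    cases oo with
    | none =>
      obtain ⟨w, p, hs, he, _⟩ := stepNone3 π c hp n 1 r h
      have hple : p ≤ 2 := g5_le _ _ _ he
      have hp2 : p ≠ 2 := by
        intro hp2
        subst hp2
        have := (cval3 π c hp hag h0 (n + 1) w r 2 hs).1 rfl
        exact hN (n + 1) (by omega) this
      rcases he with ⟨ha,_,_⟩|⟨_,hb,_⟩|⟨ha,_,_⟩|⟨_,_,hc2⟩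
      · exact absurd ha (by decide)
      · rw [hs]; exact hb
      · exact absurd ha (by decide)
      · omega
    | some p =>
      have := (stepSome3 π c hag n 1 r p h).2
      rw [this]
  intro k
  induction k with
  | zero => intro n hn h1; exact h1
  | succ m ih =>
    intro n hn h1
    have := key (n + m) (by omega) (ih n hn h1)
    rw [show n + (m + 1) = n + m + 1 by ring] at *
    exact this

lemma zeroPrio3 (hp : IsPlay (regGameE G5 1) π c)
    (hag : Agrees (regGameE G5 1) true eveStrat π c)
    (h0 : π 0 = (0, fun _ => 0, none)) (N : ℕ) (hN : ∀ i, N ≤ i → c i ≠ 2) :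
    ∃ M, ∀ n, M ≤ n → ∀ v r p, π n = (v, r, some p) → p = 0 := by
  have hple : ∀ n, N ≤ n → ∀ v r p, π n = (v, r, some p) → p ≤ 1 := by
    intro n hn v r p h
    have h2 := (inv3 π c hp hag h0 n).2
    rw [h] at h2
    have hp2 : p ≤ 2 := h2 p rfl
    have : p ≠ 2 := by
      intro hp2'
      exact hN n hn ((cval3 π c hp hag h0 n v r p h).1 hp2')
    omega
  by_cases hv : ∃ m, N ≤ m ∧ (π m).1 = 1
  · obtain ⟨m, hm, h1⟩ := hv
    refine ⟨m + 1, ?_⟩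
    intro n hn v r p h
    obtain ⟨t, ht⟩ : ∃ t, n = t + 1 := ⟨n - 1, by omega⟩
    subst ht
    rcases h' : π t with ⟨v', r', oo⟩
    cases oo with
    | none =>
      obtain ⟨w, q, hs, he, _⟩ := stepNone3 π c hp t v' r' h'
      rw [h] at hs
      obtain ⟨hw, hr, hq⟩ : v = w ∧ r = r' ∧ p = q := by
        rw [Prod.mk.injEq, Prod.mk.injEq, Option.some.injEq] at hs
        exact ⟨hs.1, hs.2.1, hs.2.2⟩
      subst hw; subst hq
      have hv1 : v' = 1 := by
        have := stay3 π c hp hag h0 N hN (t - m) m hm h1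
        rw [show m + (t - m) = t by omega, h'] at this
        exact this
      subst hv1
      have hple' : p ≤ 1 := hple (t + 1) (by omega) v r p h
      rcases he with ⟨ha,_,_⟩|⟨_,_,hc2⟩|⟨ha,_,_⟩|⟨_,_,hc2⟩ <;>
        first | exact absurd ha (by decide) | omega
    | some q =>
      have := (stepSome3 π c hag t v' r' q h').2
      rw [h] at this
      exact absurd (congrArg (fun s => s.2.2) this) (by simp)
  · push_neg at hv
    refine ⟨N + 1, ?_⟩
    intro n hn v r p h
    obtain ⟨t, ht⟩ : ∃ t, n = t + 1 := ⟨n - 1, by omega⟩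
    subst ht
    have hvz : ∀ m, N ≤ m → (π m).1 = 0 := by
      intro m hm
      have := hv m hm
      omega
    rcases h' : π t with ⟨v', r', oo⟩
    cases oo with
    | none =>
      obtain ⟨w, q, hs, he, _⟩ := stepNone3 π c hp t v' r' h'
      rw [h] at hs
      obtain ⟨hw, hr, hq⟩ : v = w ∧ r = r' ∧ p = q := by
        rw [Prod.mk.injEq, Prod.mk.injEq, Option.some.injEq] at hs
        exact ⟨hs.1, hs.2.1, hs.2.2⟩
      subst hw; subst hq
      have hv1 : v' = 0 := by have := hvz t (by omega); rw [h'] at this; exact this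
      have hv2 : v = 0 := by have := hvz (t+1) (by omega); rw [h] at this; exact this
      subst hv1 hv2
      have hple' : p ≤ 1 := hple (t + 1) (by omega) 0 r p h
      rcases he with ⟨_,_,hc2⟩|⟨ha,_,_⟩|⟨_,hb,_⟩|⟨ha,_,_⟩ <;>
        first | exact absurd ha (by decide) | exact absurd hb (by decide) | omega
    | some q =>
      have := (stepSome3 π c hag t v' r' q h').2
      rw [h] at this
      exact absurd (congrArg (fun s => s.2.2) this) (by simp)

end Part3b
section Part3c

variable (π : ℕ → RegPos (Fin 2) 1) (c : ℕ → ℕ)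

lemma tailE (hp : IsPlay (regGameE G5 1) π c)
    (hag : Agrees (regGameE G5 1) true eveStrat π c)
    (M : ℕ) (hM : ∀ n, M ≤ n → ∀ v r p, π n = (v, r, some p) → p = 0) :
    ∀ n, M ≤ n → (π n).2.1 0 = 0 → c n = 0 ∧ (π (n + 1)).2.1 0 = 0 := by
  intro n hn hr0
  rcases h : π n with ⟨v, r, oo⟩
  have hr : r 0 = 0 := by rw [h] at hr0; exact hr0
  cases oo with
  | none =>
    obtain ⟨w, p, hs, _, hc0⟩ := stepNone3 π c hp n v r h
    exact ⟨hc0, by rw [hs]; exact hr⟩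
  | some p =>
    have hp0 : p = 0 := hM n hn v r p h
    subst hp0
    obtain ⟨hc, hs⟩ := stepSome3 π c hag n v r 0 h
    rw [if_neg (by norm_num)] at hc hs
    constructor
    · rw [hc]
      unfold outE
      rw [if_pos (by rw [hr]; decide)]
      rfl
    · rw [hs]
      exact nr00 r 0

lemma part3 : WinsFrom (regGameE G5 1) true (0, fun _ => 0, none) := by
  refine ⟨eveStrat, ?_⟩
  intro π c hplay h0 hag
  simp only [if_pos rfl]
  by_cases h2 : InfOcc c 2
  · refine ⟨2, h2, by decide, ?_⟩
    intro q hq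
    obtain ⟨i, _, hi⟩ := hq 0
    subst hi
    rcases h : π i with ⟨v, r, oo⟩
    cases oo with
    | none =>
      obtain ⟨_, _, _, _, hc0⟩ := stepNone3 π c hplay i v r h
      omega
    | some p => exact (cval3 π c hplay hag h0 i v r p h).2
  · simp only [InfOcc] at h2; push_neg at h2
    obtain ⟨N, hN⟩ := h2
    obtain ⟨M, hM⟩ := zeroPrio3 π c hplay hag h0 N hN
    obtain ⟨_, v, r, p, hsome⟩ := alt3 π c hplay hag h0 (M + N)
    have hge : M ≤ 2 * (M + N) + 1 := by omega
    have hp0 : p = 0 := hM _ hge v r p hsome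
    subst hp0
    have hs := (stepSome3 π c hag _ v r 0 hsome).2
    rw [if_neg (by norm_num)] at hs
    set n0 := 2 * (M + N) + 2 with hn0
    have hstart : (π n0).2.1 0 = 0 := by
      rw [show n0 = 2 * (M + N) + 1 + 1 from rfl, hs]
      exact nr00 r 0
    have htail : ∀ k, c (n0 + k) = 0 ∧ (π (n0 + k)).2.1 0 = 0 := by
      intro k
      induction k with
      | zero =>
        exact ⟨(tailE π c hplay hag M hM n0 (by omega) hstart).1, hstart⟩
      | succ m ih =>
        have h1 : (π (n0 + m + 1)).2.1 0 = 0 :=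
          (tailE π c hplay hag M hM (n0 + m) (by omega) ih.2).2
        have h2 := (tailE π c hplay hag M hM (n0 + m + 1) (by omega) h1).1
        rw [show n0 + (m + 1) = n0 + m + 1 by ring]
        exact ⟨h2, h1⟩
    refine ⟨0, ?_, by decide, ?_⟩
    · intro n
      exact ⟨n0 + n, by omega, (htail n).1⟩
    · intro q hq
      obtain ⟨i, hi1, hi2⟩ := hq n0
      have := (htail (i - n0)).1
      rw [show n0 + (i - n0) = i by omega] at this
      omega

end Part3c


/-- Eve wins the parity game `G5` from `u`, Adam wins the
`0`-register game from `u`, and Eve wins the `1`-register game from `u`.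
Hence `G5` has register-index exactly `1`. -/
theorem stmt5 :
    WinsFrom G5 true 0 ∧
    WinsFrom (regGameE G5 0) false (0, fun _ => 0, none) ∧
    WinsFrom (regGameE G5 1) true (0, fun _ => 0, none) := by
  exact ⟨part1, part2, part3⟩
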